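/- Let α and α' be strategy profiles that agree at every coordinate n ≠ k, with α k > 0 and α' k > 0. Then the sign of (φ α − φ α') equals the sign of (c k α − c k α'), where c k is the individual cost of user k. -/

import Mathlib

/-- For a unilateral deviation of user `k` between two offloading actions
(`α k > 0` and `α' k > 0`), the sign of the potential change equals the sign of the
change in the individual cost of user `k`. -/
theorem ordinal_potential_offload_offload
    (K M : ℕ) (B σ2 τ ζ : ℝ)
    (hB : 0 < B) (hσ : 0 < σ2) (hτ : 0 < τ) (hζ : 0 < ζ)
    (p h I D S : Fin K → ℝ)
    (hp : ∀ k, 0 < p k) (hh : ∀ k, 0 < h k) (hI : ∀ k, 0 < I k)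
    (hD : ∀ k, 0 < D k) (hS : ∀ k, 0 < S k)
    (b : Fin K → ℝ) (hb : ∀ k, b k = 0 ∨ b k = 1)
    (w : Fin K → ℝ) (hw : ∀ k, w k = p k * h k)
    (Υ : Fin K → (Fin K → Fin (M + 1)) → ℝ)
    (hΥ : ∀ k α, Υ k α =
      ∑ n ∈ (Finset.univ.erase k).filter (fun n => α n = α k), w n)
    (r : Fin K → (Fin K → Fin (M + 1)) → ℝ)
    (hr : ∀ k α, r k α = (B / (M : ℝ)) * Real.logb 2 (1 + w k / (Υ k α + σ2)))
    (EL : Fin K → ℝ) (hEL : ∀ k, EL k = ζ * S k ^ 3 / τ ^ 2)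
    (EO : Fin K → (Fin K → Fin (M + 1)) → ℝ)
    (hEO : ∀ k α, EO k α = p k * (I k + (1 - b k) * D k) / r k α)
    (c : Fin K → (Fin K → Fin (M + 1)) → ℝ)
    (hc : ∀ k α, c k α = if α k = 0 then EL k else EO k α)
    (V : Fin K → ℝ)
    (hV : ∀ k, V k = w k /
        ((2 : ℝ) ^ (p k * τ ^ 2 * (M : ℝ) * (I k + (1 - b k) * D k) / (B * ζ * S k ^ 3)) - 1)
      - σ2)
    (φ : (Fin K → Fin (M + 1)) → ℝ)
    (hφ : ∀ α, φ α =
      (1 / 2) * ∑ k : Fin K, ∑ n ∈ Finset.univ.erase k,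
          w k * w n * (if α n = α k then (1 : ℝ) else 0) * (if 0 < α k then (1 : ℝ) else 0)
      + ∑ k : Fin K, w k * V k * (if α k = 0 then (1 : ℝ) else 0))
    (k : Fin K) (α α' : Fin K → Fin (M + 1))
    (hagree : ∀ n, n ≠ k → α n = α' n)
    (hk : 0 < α k) (hk' : 0 < α' k) :
    Real.sign (φ α - φ α') = Real.sign (c k α - c k α') := by
  have hαk0 : α k ≠ 0 := Fin.pos_iff_ne_zero.mp hk
  have hαk0' : α' k ≠ 0 := Fin.pos_iff_ne_zero.mp hk'
  have hwpos : ∀ n, 0 < w n := fun n => (hw n) ▸ mul_pos (hp n) (hh n)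
  have hM : 0 < M := by
    have h1 : 0 < (α k).val := hk
    have h2 := (α k).isLt
    omega
  have hC : (0 : ℝ) < B / M := div_pos hB (by exact_mod_cast hM)
  have hApos : 0 < p k * (I k + (1 - b k) * D k) := by
    have : 0 < I k + (1 - b k) * D k := by
      rcases hb k with h0 | h0 <;> simp [h0] <;> nlinarith [hI k, hD k]
    exact mul_pos (hp k) this
  have hΥnn : ∀ β, 0 ≤ Υ k β := by
    intro β
    rw [hΥ]
    exact Finset.sum_nonneg fun n _ => (hwpos n).le
  have key : ∀ β : Fin K → Fin (M + 1), β k ≠ 0 →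
      c k β = p k * (I k + (1 - b k) * D k) /
        ((B / M) * Real.logb 2 (1 + w k / (Υ k β + σ2))) := by
    intro β hβ
    rw [hc, if_neg hβ, hEO, hr]
  have hLpos : ∀ x : ℝ, 0 ≤ x → 0 < Real.logb 2 (1 + w k / (x + σ2)) := by
    intro x hx
    apply Real.logb_pos one_lt_two
    have : 0 < w k / (x + σ2) := div_pos (hwpos k) (by linarith)
    linarith
  have hmono : ∀ x y : ℝ, 0 ≤ x → 0 ≤ y → x < y →
      p k * (I k + (1 - b k) * D k) / ((B / M) * Real.logb 2 (1 + w k / (x + σ2))) <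
      p k * (I k + (1 - b k) * D k) / ((B / M) * Real.logb 2 (1 + w k / (y + σ2))) := by
    intro x y hx hy hxy
    have hxσ : 0 < x + σ2 := by linarith
    have hyσ : 0 < y + σ2 := by linarith
    have harg : 1 + w k / (y + σ2) < 1 + w k / (x + σ2) := by
      have := div_lt_div_of_pos_left (hwpos k) hxσ (by linarith : x + σ2 < y + σ2)
      linarith
    have hargpos : 0 < 1 + w k / (y + σ2) := by
      have : 0 < w k / (y + σ2) := div_pos (hwpos k) hyσ
      linarith
    have hlog : Real.logb 2 (1 + w k / (y + σ2)) < Real.logb 2 (1 + w k / (x + σ2)) :=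
      Real.logb_lt_logb one_lt_two hargpos harg
    exact div_lt_div_of_pos_left hApos (mul_pos hC (hLpos y hy))
      ((mul_lt_mul_iff_right₀ hC).mpr hlog)
  -- potential difference
  have hφdiff : φ α - φ α' = w k * (Υ k α - Υ k α') := by
    set Sa := ∑ n ∈ Finset.univ.erase k, (if α n = α k then w n else 0) with hSa
    set Sb := ∑ n ∈ Finset.univ.erase k, (if α n = α' k then w n else 0) with hSb
    have hΥa : Υ k α = Sa := by rw [hΥ, Finset.sum_filter]
    have hΥb : Υ k α' = Sb := by
      rw [hΥ, Finset.sum_filter]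
      refine Finset.sum_congr rfl fun n hn => ?_
      rw [hagree n (Finset.ne_of_mem_erase hn)]
    have hG : (∑ j : Fin K, w j * V j * (if α j = 0 then (1 : ℝ) else 0)) -
        (∑ j : Fin K, w j * V j * (if α' j = 0 then (1 : ℝ) else 0)) = 0 := by
      rw [sub_eq_zero]
      refine Finset.sum_congr rfl fun j _ => ?_
      by_cases hj : j = k
      · subst hj; rw [if_neg hαk0, if_neg hαk0']
      · rw [hagree j hj]
    have hrowk :
        (∑ n ∈ Finset.univ.erase k,
            w k * w n * (if α n = α k then (1 : ℝ) else 0) * (if 0 < α k then (1 : ℝ) else 0)) -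
        (∑ n ∈ Finset.univ.erase k,
            w k * w n * (if α' n = α' k then (1 : ℝ) else 0) * (if 0 < α' k then (1 : ℝ) else 0)) =
        w k * (Sa - Sb) := by
      rw [← Finset.sum_sub_distrib, hSa, hSb, mul_sub, Finset.mul_sum, Finset.mul_sum,
        ← Finset.sum_sub_distrib]
      refine Finset.sum_congr rfl fun n hn => ?_
      rw [if_pos hk, if_pos hk', ← hagree n (Finset.ne_of_mem_erase hn)]
      by_cases h1 : α n = α k <;> by_cases h2 : α n = α' k <;> simp [h1, h2] <;> ring
    have hrow : ∀ j ∈ Finset.univ.erase k,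
        (∑ n ∈ Finset.univ.erase j,
            w j * w n * (if α n = α j then (1 : ℝ) else 0) * (if 0 < α j then (1 : ℝ) else 0)) -
        (∑ n ∈ Finset.univ.erase j,
            w j * w n * (if α' n = α' j then (1 : ℝ) else 0) * (if 0 < α' j then (1 : ℝ) else 0)) =
        w k * ((if α j = α k then w j else 0) - (if α j = α' k then w j else 0)) := by
      intro j hj
      have hjk : j ≠ k := Finset.ne_of_mem_erase hj
      rw [← Finset.sum_sub_distrib]
      rw [Finset.sum_eq_single_of_mem k (Finset.mem_erase.mpr ⟨Ne.symm hjk, Finset.mem_univ k⟩)]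
      · rw [← hagree j hjk]
        by_cases h0 : α j = 0
        · have e1 : ¬ (α k = α j) := fun hcon => hαk0 (hcon.trans h0)
          have e2 : ¬ (α' k = α j) := fun hcon => hαk0' (hcon.trans h0)
          have e3 : ¬ (α j = α k) := fun hcon => e1 hcon.symm
          have e4 : ¬ (α j = α' k) := fun hcon => e2 hcon.symm
          simp [e1, e2, e3, e4]
        · have hpos : 0 < α j := Fin.pos_iff_ne_zero.mpr h0
          rw [if_pos hpos]
          have e1 : (if α k = α j then (1 : ℝ) else 0) = (if α j = α k then 1 else 0) := by
            by_cases hh1 : α j = α k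
            · simp [hh1]
            · simp [hh1, Ne.symm hh1]
          have e2 : (if α' k = α j then (1 : ℝ) else 0) = (if α j = α' k then 1 else 0) := by
            by_cases hh2 : α j = α' k
            · simp [hh2]
            · simp [hh2, Ne.symm hh2]
          rw [e1, e2]
          split_ifs <;> ring
      · intro n hn hnk
        rw [← hagree n hnk, ← hagree j hjk]
        ring
    have hT :
        (∑ j : Fin K, ∑ n ∈ Finset.univ.erase j,
            w j * w n * (if α n = α j then (1 : ℝ) else 0) * (if 0 < α j then (1 : ℝ) else 0)) -
        (∑ j : Fin K, ∑ n ∈ Finset.univ.erase j,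
            w j * w n * (if α' n = α' j then (1 : ℝ) else 0) * (if 0 < α' j then (1 : ℝ) else 0)) =
        2 * (w k * (Sa - Sb)) := by
      rw [← Finset.sum_sub_distrib]
      rw [← Finset.add_sum_erase Finset.univ _ (Finset.mem_univ k)]
      rw [Finset.sum_congr rfl hrow, hrowk, ← Finset.mul_sum, Finset.sum_sub_distrib,
        ← hSa, ← hSb]
      ring
    rw [hφ α, hφ α', hΥa, hΥb]
    linear_combination (1 / 2) * hT + hG
  -- conclude by trichotomy
  rcases lt_trichotomy (Υ k α) (Υ k α') with hlt | heq | hgt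
  · have h1 : φ α - φ α' < 0 := by
      rw [hφdiff]; exact mul_neg_of_pos_of_neg (hwpos k) (by linarith)
    have h2 : c k α - c k α' < 0 := by
      rw [key α hαk0, key α' hαk0']
      have := hmono (Υ k α) (Υ k α') (hΥnn α) (hΥnn α') hlt
      linarith
    rw [Real.sign_of_neg h1, Real.sign_of_neg h2]
  · have h1 : φ α - φ α' = 0 := by rw [hφdiff, heq]; ring
    have h2 : c k α - c k α' = 0 := by rw [key α hαk0, key α' hαk0', heq]; ring
    rw [h1, h2]
  · have h1 : 0 < φ α - φ α' := by
      rw [hφdiff]; exact mul_pos (hwpos k) (by linarith)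
    have h2 : 0 < c k α - c k α' := by
      rw [key α hαk0, key α' hαk0']
      have := hmono (Υ k α') (Υ k α) (hΥnn α') (hΥnn α) hgt
      linarith
    rw [Real.sign_of_pos h1, Real.sign_of_pos h2]
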